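/- Under the standing assumptions, let λ_k → ∞ and let u_{λ_k} be ground state solutions of Δ²u − Δu + (λ_k a + 1)u = |u|^{p−2}u with uniformly bounded E_{λ_k}-norms. If u_{λ_k} converges pointwise (and weakly in W^{2,2}(V)) to u₀, then u₀ vanishes identically on the complement of the potential well Ω = {a = 0}. -/

import Mathlib

open Filter Topology

structure GraphData (V : Type*) where
  ω : V → V → ℝ
  μ : V → ℝ
  sym : ∀ x y, ω x y = ω y x
  nonneg : ∀ x y, 0 ≤ ω x y
  loopless : ∀ x, ω x x = 0
  locfin : ∀ x, {y | ω x y ≠ 0}.Finite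
  μpos : ∀ x, 0 < μ x

variable {V : Type*}

noncomputable def GraphData.lap (g : GraphData V) (u : V → ℝ) (x : V) : ℝ :=
  (1 / g.μ x) * ∑' y, g.ω x y * (u y - u x)

noncomputable def GraphData.grad (g : GraphData V) (u v : V → ℝ) (x : V) : ℝ :=
  (1 / (2 * g.μ x)) * ∑' y, g.ω x y * (u y - u x) * (v y - v x)

noncomputable def GraphData.integral (g : GraphData V) (f : V → ℝ) : ℝ :=
  ∑' x, g.μ x * f x

def GraphData.G (g : GraphData V) : SimpleGraph V where
  Adj x y := 0 < g.ω x y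
  symm := ⟨fun x y h => by show 0 < g.ω y x; rw [g.sym y x]; exact h⟩
  loopless := ⟨fun x h => by have h' : 0 < g.ω x x := h; simp [g.loopless x] at h'⟩

noncomputable def GraphData.enormSq (g : GraphData V) (a : V → ℝ) (lam : ℝ) (u : V → ℝ) : ℝ :=
  ∑' x, g.μ x * ((g.lap u x) ^ 2 + g.grad u u x + (lam * a x + 1) * (u x) ^ 2)

def GraphData.memE (g : GraphData V) (a : V → ℝ) (lam : ℝ) (u : V → ℝ) : Prop :=
  Summable fun x => g.μ x * ((g.lap u x) ^ 2 + g.grad u u x + (lam * a x + 1) * (u x) ^ 2)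

noncomputable def GraphData.lpInt (g : GraphData V) (p : ℝ) (u : V → ℝ) : ℝ :=
  ∑' x, g.μ x * |u x| ^ p

noncomputable def GraphData.Jlam (g : GraphData V) (a : V → ℝ) (lam p : ℝ) (u : V → ℝ) : ℝ :=
  (1 / 2) * g.enormSq a lam u - (1 / p) * g.lpInt p u

def GraphData.Nehari (g : GraphData V) (a : V → ℝ) (lam p : ℝ) : Set (V → ℝ) :=
  {u | u ≠ 0 ∧ g.memE a lam u ∧ g.enormSq a lam u = g.lpInt p u}

noncomputable def GraphData.Jderiv (g : GraphData V) (a : V → ℝ) (lam p : ℝ) (u φ : V → ℝ) : ℝ :=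
  (∑' x, g.μ x * (g.lap u x * g.lap φ x + g.grad u φ x + (lam * a x + 1) * u x * φ x))
    - ∑' x, g.μ x * (|u x| ^ (p - 2) * u x * φ x)

def GraphData.bdry (g : GraphData V) (Ω : Set V) : Set V :=
  {y | y ∉ Ω ∧ ∃ x ∈ Ω, 0 < g.ω x y}

noncomputable def GraphData.hnormSq (g : GraphData V) (Ω : Set V) (u : V → ℝ) : ℝ :=
  (∑' x : ↥(Ω ∪ g.bdry Ω), g.μ x * ((g.lap u x) ^ 2 + g.grad u u x))
    + ∑' x : Ω, g.μ x * (u x) ^ 2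

noncomputable def GraphData.lpIntO (g : GraphData V) (Ω : Set V) (p : ℝ) (u : V → ℝ) : ℝ :=
  ∑' x : Ω, g.μ x * |u x| ^ p

noncomputable def GraphData.JOmega (g : GraphData V) (Ω : Set V) (p : ℝ) (u : V → ℝ) : ℝ :=
  (1 / 2) * g.hnormSq Ω u - (1 / p) * g.lpIntO Ω p u

def GraphData.memH (g : GraphData V) (Ω : Set V) (u : V → ℝ) : Prop :=
  ∀ x ∉ Ω, u x = 0

def GraphData.NehariO (g : GraphData V) (Ω : Set V) (p : ℝ) : Set (V → ℝ) :=
  {u | u ≠ 0 ∧ g.memH Ω u ∧ g.hnormSq Ω u = g.lpIntO Ω p u}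

noncomputable def GraphData.JderivO (g : GraphData V) (Ω : Set V) (p : ℝ) (u φ : V → ℝ) : ℝ :=
  (∑' x : ↥(Ω ∪ g.bdry Ω), g.μ x * (g.lap u x * g.lap φ x + g.grad u φ x))
    + (∑' x : Ω, g.μ x * (u x * φ x))
    - ∑' x : Ω, g.μ x * (|u x| ^ (p - 2) * u x * φ x)

/-- the limit of ground states vanishes outside the potential well. -/
theorem stmt13 (g : GraphData V) (μmin C p : ℝ) (hμmin : 0 < μmin)
    (hμ : ∀ x, μmin ≤ g.μ x) (hω : ∀ x, ∑' y, g.ω x y ≤ C) (hconn : g.G.Connected)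
    (a : V → ℝ) (ha : ∀ x, 0 ≤ a x)
    (hΩne : {x | a x = 0}.Nonempty)
    (hΩbd : ∃ D : ℕ, ∀ x ∈ {x | a x = 0}, ∀ y ∈ {x | a x = 0}, g.G.dist x y ≤ D)
    (hΩconn : (g.G.induce {x | a x = 0}).Connected)
    (x₀ : V) (hainf : ∀ M : ℝ, ∃ R : ℕ, ∀ x, R ≤ g.G.dist x x₀ → M ≤ a x)
    (hp : 2 < p)
    (lam : ℕ → ℝ) (hlam1 : ∀ k, 1 < lam k)
    (hlaminf : Filter.Tendsto lam Filter.atTop Filter.atTop)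
    (u : ℕ → V → ℝ) (hN : ∀ k, u k ∈ g.Nehari a (lam k) p)
    (B : ℝ) (hB : ∀ k, g.enormSq a (lam k) (u k) ≤ B)
    (u₀ : V → ℝ)
    (hconv : ∀ x, Filter.Tendsto (fun k => u k x) Filter.atTop (nhds (u₀ x))) :
    ∀ x, a x ≠ 0 → u₀ x = 0 := by
  intro x hax
  have haxpos : 0 < a x := lt_of_le_of_ne (ha x) (Ne.symm hax)
  have hμx : 0 < g.μ x := g.μpos x
  have key : ∀ k, (u k x) ^ 2 ≤ (B / (g.μ x * a x)) / lam k := by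
    intro k
    obtain ⟨hne, hsum, heq⟩ := hN k
    have hlamk : (0:ℝ) < lam k := lt_trans one_pos (hlam1 k)
    set f : V → ℝ := fun y => g.μ y * ((g.lap (u k) y) ^ 2 + g.grad (u k) (u k) y
      + (lam k * a y + 1) * (u k y) ^ 2) with hf
    have hgrad : ∀ y, 0 ≤ g.grad (u k) (u k) y := by
      intro y
      apply mul_nonneg
      · have := (g.μpos y).le; positivity
      · apply tsum_nonneg
        intro z
        have h1 : g.ω y z * (u k z - u k y) * (u k z - u k y)
            = g.ω y z * (u k z - u k y) ^ 2 := by ring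
        rw [h1]
        exact mul_nonneg (g.nonneg y z) (sq_nonneg _)
    have hfnn : ∀ y, 0 ≤ f y := by
      intro y
      apply mul_nonneg (g.μpos y).le
      have h2 : 0 ≤ (lam k * a y + 1) * (u k y) ^ 2 := by
        apply mul_nonneg
        · have := ha y; nlinarith
        · exact sq_nonneg _
      have h3 : 0 ≤ (g.lap (u k) y) ^ 2 := sq_nonneg _
      have := hgrad y
      linarith
    have hle : f x ≤ B := le_trans (Summable.le_tsum hsum x fun y _ => hfnn y) (hB k)
    have hlow : g.μ x * (lam k * a x) * (u k x) ^ 2 ≤ f x := by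
      have h2 : 0 ≤ (u k x) ^ 2 := sq_nonneg _
      have h3 : 0 ≤ (g.lap (u k) x) ^ 2 := sq_nonneg _
      have h4 := hgrad x
      have h5 := hμx
      simp only [hf]
      nlinarith
    rw [div_div, le_div_iff₀ (by positivity)]
    nlinarith
  have hbound : Filter.Tendsto (fun k => (B / (g.μ x * a x)) / lam k)
      Filter.atTop (nhds 0) := Filter.Tendsto.div_atTop tendsto_const_nhds hlaminf
  have hsqzero : Filter.Tendsto (fun k => (u k x) ^ 2) Filter.atTop (nhds 0) := by
    apply tendsto_of_tendsto_of_tendsto_of_le_of_le tendsto_const_nhds hbound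
    · intro k; exact sq_nonneg _
    · intro k; exact key k
  have hsqlim : Filter.Tendsto (fun k => (u k x) ^ 2) Filter.atTop (nhds ((u₀ x) ^ 2)) :=
    (hconv x).pow 2
  have : (u₀ x) ^ 2 = 0 := tendsto_nhds_unique hsqlim hsqzero
  exact pow_eq_zero_iff (by norm_num) |>.mp this
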